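/- arXiv:math/0005239 — 2 statements merged into one kernel-verified Lean document; each statement's English description precedes it below -/
import Mathlib

section
/- For an orthogonal direct sum E = E₁ ⊕ E₂ of quadratic spaces, the Clifford algebra Cl(E) is isomorphic to the graded (super) tensor product Cl(E₁) ⊗̂ Cl(E₂). -/
open scoped TensorProduct

/-- For an orthogonal direct sum `E = E₁ ⊕ E₂` of real quadratic spaces (formalized as the
product module with quadratic form `Q₁.prod Q₂`), the Clifford algebra `Cl(E)` is isomorphic
to the ℤ/2-graded (super) tensor product `Cl(E₁) ⊗̂ Cl(E₂)` of the Clifford algebras with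
their even-odd gradings. -/
theorem cliffordAlgebra_prod_equiv_graded_tensor
    {M₁ M₂ : Type*} [AddCommGroup M₁] [AddCommGroup M₂] [Module ℝ M₁] [Module ℝ M₂]
    (Q₁ : QuadraticForm ℝ M₁) (Q₂ : QuadraticForm ℝ M₂) :
    Nonempty (CliffordAlgebra (Q₁.prod Q₂) ≃ₐ[ℝ]
      (CliffordAlgebra.evenOdd Q₁ ᵍ⊗[ℝ] CliffordAlgebra.evenOdd Q₂)) := by
  exact ⟨CliffordAlgebra.prodEquiv Q₁ Q₂⟩
end

section
/- Let E be an even-dimensional real quadratic space with nondegenerate quadratic form Q such that the volume element ε of Cl(E,Q) satisfies ε² = 1 (Cl(E,Q) is 'positive'). Then Cl(E,Q) is isomorphic as an ℝ-algebra to Cl(E,-Q). -/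
section Aux

variable {A : Type*} [Ring A]

/-- If `x` anticommutes with every element of `l`, then moving `x` across the product of `l`
picks up a sign `(-1)^l.length`. -/
lemma aux_mul_list_prod (x : A) :
    ∀ (l : List A), (∀ y ∈ l, x * y = -(y * x)) →
      x * l.prod = (-1 : A) ^ l.length * (l.prod * x) := by
  intro l
  induction l with
  | nil => simp
  | cons a t ih =>
    intro h
    have ha := h a (by simp)
    have ht := ih (fun y hy => h y (by simp [hy]))
    rcases Nat.even_or_odd t.length with hp | hp
    · simp only [hp.neg_one_pow, one_mul] at ht
      simp only [List.prod_cons, List.length_cons, hp.add_one.neg_one_pow, neg_one_mul]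
      calc x * (a * t.prod) = (x * a) * t.prod := by rw [mul_assoc]
        _ = -(a * (x * t.prod)) := by rw [ha]; noncomm_ring
        _ = -(a * (t.prod * x)) := by rw [ht]
        _ = -(a * t.prod * x) := by rw [mul_assoc]
    · rw [hp.neg_one_pow, neg_one_mul] at ht
      simp only [List.prod_cons, List.length_cons]
      have hev : Even (t.length + 1) := hp.add_one
      rw [hev.neg_one_pow, one_mul]
      calc x * (a * t.prod) = (x * a) * t.prod := by rw [mul_assoc]
        _ = -(a * (x * t.prod)) := by rw [ha]; noncomm_ring
        _ = -(a * -(t.prod * x)) := by rw [ht]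
        _ = a * t.prod * x := by noncomm_ring

/-- If `f j` anticommutes with all the other `f i`, then moving `f j` across the full
product picks up a sign `(-1)^(n-1)`. -/
lemma aux_mul_ofFn_prod :
    ∀ {n : ℕ} (f : Fin n → A) (j : Fin n),
      (∀ i, i ≠ j → f j * f i = -(f i * f j)) →
      f j * (List.ofFn f).prod = (-1 : A) ^ (n - 1) * ((List.ofFn f).prod * f j) := by
  intro n
  induction n with
  | zero => exact fun f j _ => j.elim0
  | succ m ih =>
    intro f j h
    rw [List.ofFn_succ, List.prod_cons]
    induction j using Fin.cases with
    | zero =>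
      have hA := aux_mul_list_prod (f 0) (List.ofFn fun i : Fin m => f i.succ) ?hyp
      case hyp =>
        intro y hy
        rw [List.mem_ofFn] at hy
        obtain ⟨i, rfl⟩ := hy
        exact h i.succ (Fin.succ_ne_zero i)
      simp only [List.length_ofFn] at hA
      set T := (List.ofFn fun i : Fin m => f i.succ).prod with hT
      simp only [Nat.add_sub_cancel]
      rcases Nat.even_or_odd m with hp | hp
      · rw [hp.neg_one_pow, one_mul] at hA ⊢
        conv_lhs => rw [hA]
        noncomm_ring
      · rw [hp.neg_one_pow, neg_one_mul] at hA ⊢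
        conv_lhs => rw [hA]
        noncomm_ring
    | succ j' =>
      have hm : 0 < m := j'.pos
      obtain ⟨k, rfl⟩ : ∃ k, m = k + 1 := ⟨m - 1, (Nat.succ_pred_eq_of_pos hm).symm⟩
      have h0 : f j'.succ * f 0 = -(f 0 * f j'.succ) := h 0 (Fin.succ_ne_zero j').symm
      have hI := ih (fun i => f i.succ) j' ?hyp
      case hyp =>
        intro i hij
        exact h i.succ (fun hc => hij (Fin.succ_injective _ hc))
      set T := (List.ofFn fun i : Fin (k+1) => f i.succ).prod with hT
      simp only [Nat.add_sub_cancel] at hI ⊢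
      rcases Nat.even_or_odd k with hp | hp
      · rw [hp.neg_one_pow, one_mul] at hI
        rw [hp.add_one.neg_one_pow, neg_one_mul]
        calc f j'.succ * (f 0 * T) = (f j'.succ * f 0) * T := by rw [mul_assoc]
          _ = -(f 0 * (f j'.succ * T)) := by rw [h0]; noncomm_ring
          _ = -(f 0 * (T * f j'.succ)) := by rw [hI]
          _ = -(f 0 * T * f j'.succ) := by rw [mul_assoc]
      · rw [hp.neg_one_pow, neg_one_mul] at hI
        rw [hp.add_one.neg_one_pow, one_mul]
        calc f j'.succ * (f 0 * T) = (f j'.succ * f 0) * T := by rw [mul_assoc]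
          _ = -(f 0 * (f j'.succ * T)) := by rw [h0]; noncomm_ring
          _ = -(f 0 * -(T * f j'.succ)) := by rw [hI]
          _ = f 0 * T * f j'.succ := by noncomm_ring

/-- Square of a product of pairwise anticommuting elements whose squares are scalars. -/
lemma aux_prod_sq {R : Type*} [CommRing R] [Algebra R A] :
    ∀ {n : ℕ} (f : Fin n → A) (q : Fin n → R),
      (∀ i j, i ≠ j → f i * f j = -(f j * f i)) →
      (∀ i, f i * f i = algebraMap R A (q i)) →
      (List.ofFn f).prod * (List.ofFn f).prod
        = (-1 : A) ^ (n.choose 2) * algebraMap R A (∏ i, q i) := by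
  intro n
  induction n with
  | zero => intro f q _ _; simp
  | succ m ih =>
    intro f q hanti hsq
    have hA := aux_mul_list_prod (f 0) (List.ofFn fun i : Fin m => f i.succ) ?hyp
    case hyp =>
      intro y hy
      rw [List.mem_ofFn] at hy
      obtain ⟨i, rfl⟩ := hy
      exact hanti 0 i.succ (Fin.succ_ne_zero i).symm
    have hI := ih (fun i => f i.succ) (fun i => q i.succ)
      (fun i j hij => hanti i.succ j.succ (fun hc => hij (Fin.succ_injective _ hc)))
      (fun i => hsq i.succ)
    simp only [List.length_ofFn] at hA
    rw [List.ofFn_succ, List.prod_cons]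
    set T := (List.ofFn fun i : Fin m => f i.succ).prod with hT
    have key : f 0 * T * (f 0 * T) = (-1:A)^m * (algebraMap R A (q 0) * (T * T)) := by
      rcases Nat.even_or_odd m with hp | hp
      · rw [hp.neg_one_pow, one_mul] at hA ⊢
        calc f 0 * T * (f 0 * T) = f 0 * (T * f 0) * T := by noncomm_ring
          _ = f 0 * (f 0 * T) * T := by rw [← hA]
          _ = (f 0 * f 0) * (T * T) := by noncomm_ring
          _ = algebraMap R A (q 0) * (T * T) := by rw [hsq 0]
      · rw [hp.neg_one_pow, neg_one_mul] at hA ⊢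
        have hA' : T * f 0 = -(f 0 * T) := by rw [hA, neg_neg]
        calc f 0 * T * (f 0 * T) = f 0 * (T * f 0) * T := by noncomm_ring
          _ = f 0 * -(f 0 * T) * T := by rw [hA']
          _ = -((f 0 * f 0) * (T * T)) := by noncomm_ring
          _ = -(algebraMap R A (q 0) * (T * T)) := by rw [hsq 0]
    rw [key, hI, Fin.prod_univ_succ, map_mul]
    have hchoose : (m + 1).choose 2 = m + m.choose 2 := by
      rw [Nat.choose_succ_succ]
      simp [Nat.choose_one_right]
    rw [hchoose, pow_add, mul_assoc]
    conv_lhs => rw [← mul_assoc (algebraMap R A (q 0)), Algebra.commutes, mul_assoc]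

/-- Products of pairs `ε * xᵢ` where each `xᵢ` anticommutes with `ε` and `ε * ε = 1`. -/
lemma aux_eps_prod (ε : A) (hε : ε * ε = 1) :
    ∀ (m : ℕ) (l : List A), l.length = 2 * m → (∀ y ∈ l, y * ε = -(ε * y)) →
      (l.map (fun y => ε * y)).prod = (-1 : A) ^ m * l.prod := by
  intro m
  induction m with
  | zero =>
    intro l hl _
    rw [Nat.mul_zero, List.length_eq_zero_iff] at hl
    subst hl; simp
  | succ k ih =>
    intro l hl hanti
    match l with
    | a :: b :: t =>
      have ht : t.length = 2 * k := by
        simp only [List.length_cons] at hl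
        omega
      have hIH := ih t ht (fun y hy => hanti y (by simp [hy]))
      have ha : a * ε = -(ε * a) := hanti a (by simp)
      have hab : (ε * a) * (ε * b) = -(a * b) := by
        calc (ε * a) * (ε * b) = ε * (a * ε) * b := by noncomm_ring
          _ = ε * -(ε * a) * b := by rw [ha]
          _ = -((ε * ε) * (a * b)) := by noncomm_ring
          _ = -(a * b) := by rw [hε, one_mul]
      simp only [List.map_cons, List.prod_cons]
      have step1 : ε * a * (ε * b * (t.map fun y => ε * y).prod)
          = ((ε * a) * (ε * b)) * (t.map fun y => ε * y).prod := by noncomm_ring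
      rw [step1, hab, hIH]
      rcases Nat.even_or_odd k with hp | hp
      · rw [hp.neg_one_pow, one_mul, (hp.add_one).neg_one_pow, neg_one_mul]
        noncomm_ring
      · rw [hp.neg_one_pow, neg_one_mul]
        have hk1 : Even (k + 1) := hp.add_one
        rw [hk1.neg_one_pow, one_mul]
        noncomm_ring

end Aux

/-- Let `E` be an even-dimensional real quadratic space with nondegenerate quadratic form `Q`
such that the volume element `ε = ι e₁ ⋯ ι eₙ` (for an orthogonal basis `(eᵢ)`) of `Cl(E, Q)`
satisfies `ε² = 1`.  Then `Cl(E, Q)` is isomorphic as an `ℝ`-algebra to `Cl(E, -Q)`. -/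
theorem cliffordAlgebra_positive_equiv_neg
    {E : Type*} [AddCommGroup E] [Module ℝ E] [FiniteDimensional ℝ E]
    {n : ℕ} (hn : Even n)
    (Q : QuadraticForm ℝ E) (hQnd : LinearMap.BilinForm.Nondegenerate Q.polarBilin)
    (e : Module.Basis (Fin n) ℝ E)
    (horth : ∀ i j : Fin n, i ≠ j → QuadraticMap.polar Q (e i) (e j) = 0)
    (hpos : ((List.ofFn fun i : Fin n => CliffordAlgebra.ι Q (e i)).prod) ^ 2 = 1) :
    Nonempty (CliffordAlgebra Q ≃ₐ[ℝ] CliffordAlgebra (-Q)) := by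
  classical
  set ε : CliffordAlgebra Q :=
    (List.ofFn fun i : Fin n => CliffordAlgebra.ι Q (e i)).prod with hε_def
  set ε' : CliffordAlgebra (-Q) :=
    (List.ofFn fun i : Fin n => CliffordAlgebra.ι (-Q) (e i)).prod with hε'_def
  have hεsq : ε * ε = 1 := by rw [← sq]; exact hpos
  -- pairwise anticommutation of the generators, in both algebras
  have hanti : ∀ i j : Fin n, i ≠ j →
      CliffordAlgebra.ι Q (e i) * CliffordAlgebra.ι Q (e j)
        = -(CliffordAlgebra.ι Q (e j) * CliffordAlgebra.ι Q (e i)) := by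
    intro i j hij
    have h := CliffordAlgebra.ι_mul_ι_add_swap (Q := Q) (e i) (e j)
    rw [horth i j hij, map_zero] at h
    exact eq_neg_of_add_eq_zero_left h
  have horth' : ∀ i j : Fin n, i ≠ j → QuadraticMap.polar (⇑(-Q)) (e i) (e j) = 0 := by
    intro i j hij
    have h : QuadraticMap.polar (⇑(-Q)) (e i) (e j)
        = -QuadraticMap.polar (⇑Q) (e i) (e j) := by
      simp only [QuadraticMap.polar, QuadraticMap.neg_apply]
      ring
    rw [h, horth i j hij, neg_zero]
  have hanti' : ∀ i j : Fin n, i ≠ j →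
      CliffordAlgebra.ι (-Q) (e i) * CliffordAlgebra.ι (-Q) (e j)
        = -(CliffordAlgebra.ι (-Q) (e j) * CliffordAlgebra.ι (-Q) (e i)) := by
    intro i j hij
    have h := CliffordAlgebra.ι_mul_ι_add_swap (Q := -Q) (e i) (e j)
    rw [horth' i j hij, map_zero] at h
    exact eq_neg_of_add_eq_zero_left h
  -- ε' squares to 1 as well
  have hsqQ := aux_prod_sq (fun i => CliffordAlgebra.ι Q (e i)) (fun i => Q (e i))
    hanti (fun i => CliffordAlgebra.ι_sq_scalar Q (e i))
  have hsqQ' := aux_prod_sq (fun i => CliffordAlgebra.ι (-Q) (e i)) (fun i => (-Q) (e i))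
    hanti' (fun i => CliffordAlgebra.ι_sq_scalar (-Q) (e i))
  rw [← hε_def] at hsqQ
  rw [← hε'_def] at hsqQ'
  have hsqQb : ε * ε
      = (-1 : CliffordAlgebra Q) ^ n.choose 2
        * algebraMap ℝ (CliffordAlgebra Q) (∏ i, Q (e i)) := hsqQ
  have hsqQ'b : ε' * ε'
      = (-1 : CliffordAlgebra (-Q)) ^ n.choose 2
        * algebraMap ℝ (CliffordAlgebra (-Q)) (∏ i, (-Q) (e i)) := hsqQ'
  have hscal : ((-1 : ℝ) ^ n.choose 2) * ∏ i, Q (e i) = 1 := by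
    have hmap : algebraMap ℝ (CliffordAlgebra Q) (((-1 : ℝ) ^ n.choose 2) * ∏ i, Q (e i))
        = algebraMap ℝ (CliffordAlgebra Q) 1 := by
      rw [map_mul, map_pow, map_neg, map_one, ← hsqQb, hεsq]
    exact (RingHom.injective (algebraMap ℝ (CliffordAlgebra Q))) hmap
  have hprodneg : (∏ i, (-Q) (e i)) = ∏ i, Q (e i) := by
    have h1 : (∏ i : Fin n, (-Q) (e i)) = ∏ i : Fin n, (-1 : ℝ) * Q (e i) := by
      apply Finset.prod_congr rfl
      intro i _
      rw [QuadraticMap.neg_apply]; ring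
    rw [h1, Finset.prod_mul_distrib, Finset.prod_const, Finset.card_univ, Fintype.card_fin,
      hn.neg_one_pow, one_mul]
  have hε'sq : ε' * ε' = 1 := by
    rw [hsqQ'b, hprodneg]
    calc (-1 : CliffordAlgebra (-Q)) ^ n.choose 2 * algebraMap ℝ _ (∏ i, Q (e i))
        = algebraMap ℝ (CliffordAlgebra (-Q)) (((-1 : ℝ) ^ n.choose 2) * ∏ i, Q (e i)) := by
          rw [map_mul, map_pow, map_neg, map_one]
      _ = 1 := by rw [hscal, map_one]
  -- anticommutation of ε with every ι v
  have hbasis : ∀ j : Fin n,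
      CliffordAlgebra.ι Q (e j) * ε = -(ε * CliffordAlgebra.ι Q (e j)) := by
    intro j
    have h := aux_mul_ofFn_prod (fun i => CliffordAlgebra.ι Q (e i)) j
      (fun i hij => hanti j i (Ne.symm hij))
    have hodd : Odd (n - 1) := Nat.Even.sub_odd j.pos hn odd_one
    rw [hodd.neg_one_pow, neg_one_mul, ← hε_def] at h
    exact h
  have hbasis' : ∀ j : Fin n,
      CliffordAlgebra.ι (-Q) (e j) * ε' = -(ε' * CliffordAlgebra.ι (-Q) (e j)) := by
    intro j
    have h := aux_mul_ofFn_prod (fun i => CliffordAlgebra.ι (-Q) (e i)) j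
      (fun i hij => hanti' j i (Ne.symm hij))
    have hodd : Odd (n - 1) := Nat.Even.sub_odd j.pos hn odd_one
    rw [hodd.neg_one_pow, neg_one_mul, ← hε'_def] at h
    exact h
  have hcomm : ∀ v : E, CliffordAlgebra.ι Q v * ε = -(ε * CliffordAlgebra.ι Q v) := by
    have hLM : (LinearMap.mulRight ℝ ε).comp (CliffordAlgebra.ι Q)
        = -((LinearMap.mulLeft ℝ ε).comp (CliffordAlgebra.ι Q)) := by
      apply Module.Basis.ext e
      intro j
      simpa using hbasis j
    intro v
    simpa using DFunLike.congr_fun hLM v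
  have hcomm' : ∀ v : E, CliffordAlgebra.ι (-Q) v * ε' = -(ε' * CliffordAlgebra.ι (-Q) v) := by
    have hLM : (LinearMap.mulRight ℝ ε').comp (CliffordAlgebra.ι (-Q))
        = -((LinearMap.mulLeft ℝ ε').comp (CliffordAlgebra.ι (-Q))) := by
      apply Module.Basis.ext e
      intro j
      simpa using hbasis' j
    intro v
    simpa using DFunLike.congr_fun hLM v
  -- the two algebra maps
  have hf : ∀ v : E,
      ((LinearMap.mulLeft ℝ ε).comp (CliffordAlgebra.ι Q)) v
        * ((LinearMap.mulLeft ℝ ε).comp (CliffordAlgebra.ι Q)) v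
        = algebraMap ℝ (CliffordAlgebra Q) ((-Q) v) := by
    intro v
    simp only [LinearMap.comp_apply, LinearMap.mulLeft_apply]
    calc ε * CliffordAlgebra.ι Q v * (ε * CliffordAlgebra.ι Q v)
        = ε * (CliffordAlgebra.ι Q v * ε) * CliffordAlgebra.ι Q v := by noncomm_ring
      _ = ε * -(ε * CliffordAlgebra.ι Q v) * CliffordAlgebra.ι Q v := by rw [hcomm v]
      _ = -((ε * ε) * (CliffordAlgebra.ι Q v * CliffordAlgebra.ι Q v)) := by noncomm_ring
      _ = -(algebraMap ℝ (CliffordAlgebra Q) (Q v)) := by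
          rw [hεsq, CliffordAlgebra.ι_sq_scalar, one_mul]
      _ = algebraMap ℝ (CliffordAlgebra Q) ((-Q) v) := by
          rw [QuadraticMap.neg_apply, map_neg]
  have hg : ∀ v : E,
      ((LinearMap.mulLeft ℝ ε').comp (CliffordAlgebra.ι (-Q))) v
        * ((LinearMap.mulLeft ℝ ε').comp (CliffordAlgebra.ι (-Q))) v
        = algebraMap ℝ (CliffordAlgebra (-Q)) (Q v) := by
    intro v
    simp only [LinearMap.comp_apply, LinearMap.mulLeft_apply]
    calc ε' * CliffordAlgebra.ι (-Q) v * (ε' * CliffordAlgebra.ι (-Q) v)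
        = ε' * (CliffordAlgebra.ι (-Q) v * ε') * CliffordAlgebra.ι (-Q) v := by noncomm_ring
      _ = ε' * -(ε' * CliffordAlgebra.ι (-Q) v) * CliffordAlgebra.ι (-Q) v := by rw [hcomm' v]
      _ = -((ε' * ε') * (CliffordAlgebra.ι (-Q) v * CliffordAlgebra.ι (-Q) v)) := by noncomm_ring
      _ = -(algebraMap ℝ (CliffordAlgebra (-Q)) ((-Q) v)) := by
          rw [hε'sq, CliffordAlgebra.ι_sq_scalar, one_mul]
      _ = algebraMap ℝ (CliffordAlgebra (-Q)) (Q v) := by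
          rw [QuadraticMap.neg_apply, map_neg, neg_neg]
  set F : CliffordAlgebra (-Q) →ₐ[ℝ] CliffordAlgebra Q :=
    CliffordAlgebra.lift (-Q) ⟨(LinearMap.mulLeft ℝ ε).comp (CliffordAlgebra.ι Q), hf⟩ with hF_def
  set G : CliffordAlgebra Q →ₐ[ℝ] CliffordAlgebra (-Q) :=
    CliffordAlgebra.lift Q ⟨(LinearMap.mulLeft ℝ ε').comp (CliffordAlgebra.ι (-Q)), hg⟩ with hG_def
  have hFι : ∀ v : E, F (CliffordAlgebra.ι (-Q) v) = ε * CliffordAlgebra.ι Q v := by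
    intro v
    rw [hF_def, CliffordAlgebra.lift_ι_apply]
    rfl
  have hGι : ∀ v : E, G (CliffordAlgebra.ι Q v) = ε' * CliffordAlgebra.ι (-Q) v := by
    intro v
    rw [hG_def, CliffordAlgebra.lift_ι_apply]
    rfl
  -- n = 2 * (n / 2)
  obtain ⟨m, hm⟩ := hn
  have hn2 : n = 2 * m := by omega
  -- F ε' = (-1)^m * ε  and  G ε = (-1)^m * ε'
  have hFε' : F ε' = (-1 : CliffordAlgebra Q) ^ m * ε := by
    rw [hε'_def, map_list_prod, List.map_ofFn]
    have h1 : (List.ofFn (F ∘ fun i : Fin n => CliffordAlgebra.ι (-Q) (e i)))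
        = (List.ofFn fun i : Fin n => CliffordAlgebra.ι Q (e i)).map (fun y => ε * y) := by
      rw [List.map_ofFn]
      congr 1
      funext i
      exact hFι (e i)
    rw [h1]
    rw [aux_eps_prod ε hεsq m _ (by simp [hn2]) ?anti]
    case anti =>
      intro y hy
      rw [List.mem_ofFn] at hy
      obtain ⟨i, rfl⟩ := hy
      exact hbasis i
  have hGε : G ε = (-1 : CliffordAlgebra (-Q)) ^ m * ε' := by
    rw [hε_def, map_list_prod, List.map_ofFn]
    have h1 : (List.ofFn (G ∘ fun i : Fin n => CliffordAlgebra.ι Q (e i)))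
        = (List.ofFn fun i : Fin n => CliffordAlgebra.ι (-Q) (e i)).map (fun y => ε' * y) := by
      rw [List.map_ofFn]
      congr 1
      funext i
      exact hGι (e i)
    rw [h1]
    rw [aux_eps_prod ε' hε'sq m _ (by simp [hn2]) ?anti]
    case anti =>
      intro y hy
      rw [List.mem_ofFn] at hy
      obtain ⟨i, rfl⟩ := hy
      exact hbasis' i
  -- the composites act by ±1 on generators
  have hFG : ∀ v : E, F (G (CliffordAlgebra.ι Q v))
      = (-1 : CliffordAlgebra Q) ^ m * CliffordAlgebra.ι Q v := by
    intro v
    rw [hGι v, map_mul, hFε', hFι v]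
    calc (-1 : CliffordAlgebra Q) ^ m * ε * (ε * CliffordAlgebra.ι Q v)
        = (-1 : CliffordAlgebra Q) ^ m * ((ε * ε) * CliffordAlgebra.ι Q v) := by noncomm_ring
      _ = (-1 : CliffordAlgebra Q) ^ m * CliffordAlgebra.ι Q v := by rw [hεsq, one_mul]
  have hGF : ∀ v : E, G (F (CliffordAlgebra.ι (-Q) v))
      = (-1 : CliffordAlgebra (-Q)) ^ m * CliffordAlgebra.ι (-Q) v := by
    intro v
    rw [hFι v, map_mul, hGε, hGι v]
    calc (-1 : CliffordAlgebra (-Q)) ^ m * ε' * (ε' * CliffordAlgebra.ι (-Q) v)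
        = (-1 : CliffordAlgebra (-Q)) ^ m * ((ε' * ε') * CliffordAlgebra.ι (-Q) v) := by
          noncomm_ring
      _ = (-1 : CliffordAlgebra (-Q)) ^ m * CliffordAlgebra.ι (-Q) v := by rw [hε'sq, one_mul]
  -- so the composites are either the identity or the grade involution; both are bijective
  have hFGbij : Function.Bijective (F.comp G : CliffordAlgebra Q →ₐ[ℝ] CliffordAlgebra Q) := by
    rcases Nat.even_or_odd m with hp | hp
    · have : F.comp G = AlgHom.id ℝ (CliffordAlgebra Q) := by
        apply CliffordAlgebra.hom_ext
        apply LinearMap.ext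
        intro v
        simp only [LinearMap.comp_apply, AlgHom.toLinearMap_apply, AlgHom.comp_apply,
          AlgHom.id_apply]
        rw [hFG v, hp.neg_one_pow, one_mul]
      rw [this]
      exact Function.bijective_id
    · have : F.comp G = CliffordAlgebra.involute := by
        apply CliffordAlgebra.hom_ext
        apply LinearMap.ext
        intro v
        simp only [LinearMap.comp_apply, AlgHom.toLinearMap_apply, AlgHom.comp_apply]
        rw [hFG v, hp.neg_one_pow, neg_one_mul, CliffordAlgebra.involute_ι]
      rw [this]
      exact Function.Involutive.bijective (fun x => CliffordAlgebra.involute_involute x)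
  have hGFbij : Function.Bijective (G.comp F : CliffordAlgebra (-Q) →ₐ[ℝ] CliffordAlgebra (-Q)) := by
    rcases Nat.even_or_odd m with hp | hp
    · have : G.comp F = AlgHom.id ℝ (CliffordAlgebra (-Q)) := by
        apply CliffordAlgebra.hom_ext
        apply LinearMap.ext
        intro v
        simp only [LinearMap.comp_apply, AlgHom.toLinearMap_apply, AlgHom.comp_apply,
          AlgHom.id_apply]
        rw [hGF v, hp.neg_one_pow, one_mul]
      rw [this]
      exact Function.bijective_id
    · have : G.comp F = CliffordAlgebra.involute := by
        apply CliffordAlgebra.hom_ext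
        apply LinearMap.ext
        intro v
        simp only [LinearMap.comp_apply, AlgHom.toLinearMap_apply, AlgHom.comp_apply]
        rw [hGF v, hp.neg_one_pow, neg_one_mul, CliffordAlgebra.involute_ι]
      rw [this]
      exact Function.Involutive.bijective (fun x => CliffordAlgebra.involute_involute x)
  have hFinj : Function.Injective F := by
    intro x y hxy
    have := hGFbij.injective (a₁ := x) (a₂ := y) (by simpa using congrArg G hxy)
    exact this
  have hFsurj : Function.Surjective F := by
    intro y
    obtain ⟨x, hx⟩ := hFGbij.surjective y
    exact ⟨G x, by simpa using hx⟩
  exact ⟨(AlgEquiv.ofBijective F ⟨hFinj, hFsurj⟩).symm⟩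
end
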